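/- Let p and q be positive integers, and let ρ : H_{p,q} → ℤ be the group homomorphism determined by ρ(τ) = 1 and ρ(x_n) = 0 for all n ∈ ℤ. Then the kernel of ρ is isomorphic to the group with presentation < x_n (n ∈ ℤ) | [x_i, x_j] = 1, x_{i+1}^{pq} x_i^{-(2pq+1)} x_{i-1}^{pq} = 1 (i, j ∈ ℤ) >, via a map sending each generator x_n of the latter group to the element x_n of H_{p,q}. -/

import Mathlib

/-- The relators of the presentation
`< τ, x_n (n ∈ ℤ) | [x_i, x_j] = 1, x_{i+1}^{pq} x_i^{-(2pq+1)} x_{i-1}^{pq} = 1,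
τ x_i τ⁻¹ = x_{i+1} >`, where `τ` is the generator `Sum.inl ()` and `x_n` is the
generator `Sum.inr n`, and `[g,h] = g⁻¹ h⁻¹ g h`. -/
def hpqRels (p q : ℤ) : Set (FreeGroup (Unit ⊕ ℤ)) :=
  let τ : FreeGroup (Unit ⊕ ℤ) := FreeGroup.of (Sum.inl ())
  let X : ℤ → FreeGroup (Unit ⊕ ℤ) := fun n => FreeGroup.of (Sum.inr n)
  (⋃ i : ℤ, ⋃ j : ℤ, {(X i)⁻¹ * (X j)⁻¹ * X i * X j}) ∪
    (⋃ i : ℤ, {(X (i + 1)) ^ (p * q) * (X i) ^ (-(2 * p * q + 1)) * (X (i - 1)) ^ (p * q)}) ∪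
    (⋃ i : ℤ, {τ * X i * τ⁻¹ * (X (i + 1))⁻¹})

/-- The group `H_{p,q}`. -/
abbrev Hpq (p q : ℤ) := PresentedGroup (hpqRels p q)

/-- The relators of the presentation
`< x_n (n ∈ ℤ) | [x_i, x_j] = 1, x_{i+1}^{pq} x_i^{-(2pq+1)} x_{i-1}^{pq} = 1 >`,
where `x_n` is the generator `n`. -/
def kerRels (p q : ℤ) : Set (FreeGroup ℤ) :=
  let X : ℤ → FreeGroup ℤ := fun n => FreeGroup.of n
  (⋃ i : ℤ, ⋃ j : ℤ, {(X i)⁻¹ * (X j)⁻¹ * X i * X j}) ∪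
    (⋃ i : ℤ, {(X (i + 1)) ^ (p * q) * (X i) ^ (-(2 * p * q + 1)) * (X (i - 1)) ^ (p * q)})

lemma mk_rel {α : Type*} {rels : Set (FreeGroup α)} {r : FreeGroup α} (h : r ∈ rels) :
    PresentedGroup.mk rels r = 1 :=
  (QuotientGroup.eq_one_iff _).2 (Subgroup.subset_normalClosure h)
namespace KerRhoAux

variable (p q : ℤ)

/-! ### Relations in `K` -/

lemma K_comm (i j : ℤ) : (PresentedGroup.of i : PresentedGroup (kerRels p q)) * PresentedGroup.of j
    = PresentedGroup.of j * PresentedGroup.of i := by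
  have h : ((FreeGroup.of i)⁻¹ * (FreeGroup.of j)⁻¹ * FreeGroup.of i * FreeGroup.of j)
      ∈ kerRels p q := by
    simp only [kerRels, Set.mem_union, Set.mem_iUnion, Set.mem_singleton_iff]
    exact Or.inl ⟨i, j, rfl⟩
  have h2' := mk_rel h
  simp only [map_mul, map_inv] at h2'
  have h2 : (PresentedGroup.of i : PresentedGroup (kerRels p q))⁻¹ * (PresentedGroup.of j)⁻¹ *
      PresentedGroup.of i * PresentedGroup.of j = 1 := h2'
  calc (PresentedGroup.of i : PresentedGroup (kerRels p q)) * PresentedGroup.of j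
      = PresentedGroup.of j * PresentedGroup.of i *
        ((PresentedGroup.of i : PresentedGroup (kerRels p q))⁻¹ * (PresentedGroup.of j)⁻¹ *
          PresentedGroup.of i * PresentedGroup.of j) := by group
    _ = PresentedGroup.of j * PresentedGroup.of i := by rw [h2, mul_one]

lemma K_rel (i : ℤ) : (PresentedGroup.of (i+1) : PresentedGroup (kerRels p q)) ^ (p*q) *
    (PresentedGroup.of i) ^ (-(2*p*q+1)) * (PresentedGroup.of (i-1)) ^ (p*q) = 1 := by
  have h : ((FreeGroup.of (i+1)) ^ (p*q) * (FreeGroup.of i) ^ (-(2*p*q+1)) *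
      (FreeGroup.of (i-1)) ^ (p*q)) ∈ kerRels p q := by
    simp only [kerRels, Set.mem_union, Set.mem_iUnion, Set.mem_singleton_iff]
    exact Or.inr ⟨i, rfl⟩
  have h2' := mk_rel h
  simp only [map_mul, map_zpow] at h2'
  exact h2'

/-! ### Relations in `H` -/

lemma H_comm (i j : ℤ) : (PresentedGroup.of (Sum.inr i) : Hpq p q) * PresentedGroup.of (Sum.inr j)
    = PresentedGroup.of (Sum.inr j) * PresentedGroup.of (Sum.inr i) := by
  have h : ((FreeGroup.of (Sum.inr i : Unit ⊕ ℤ))⁻¹ * (FreeGroup.of (Sum.inr j))⁻¹ *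
      FreeGroup.of (Sum.inr i) * FreeGroup.of (Sum.inr j)) ∈ hpqRels p q := by
    simp only [hpqRels, Set.mem_union, Set.mem_iUnion, Set.mem_singleton_iff]
    exact Or.inl (Or.inl ⟨i, j, rfl⟩)
  have h2' := mk_rel h
  simp only [map_mul, map_inv] at h2'
  have h2 : (PresentedGroup.of (Sum.inr i) : Hpq p q)⁻¹ * (PresentedGroup.of (Sum.inr j))⁻¹ *
      PresentedGroup.of (Sum.inr i) * PresentedGroup.of (Sum.inr j) = 1 := h2'
  calc (PresentedGroup.of (Sum.inr i) : Hpq p q) * PresentedGroup.of (Sum.inr j)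
      = PresentedGroup.of (Sum.inr j) * PresentedGroup.of (Sum.inr i) *
        ((PresentedGroup.of (Sum.inr i) : Hpq p q)⁻¹ * (PresentedGroup.of (Sum.inr j))⁻¹ *
          PresentedGroup.of (Sum.inr i) * PresentedGroup.of (Sum.inr j)) := by group
    _ = _ := by rw [h2, mul_one]

lemma H_rel (i : ℤ) : (PresentedGroup.of (Sum.inr (i+1)) : Hpq p q) ^ (p*q) *
    (PresentedGroup.of (Sum.inr i)) ^ (-(2*p*q+1)) *
    (PresentedGroup.of (Sum.inr (i-1))) ^ (p*q) = 1 := by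
  have h : ((FreeGroup.of (Sum.inr (i+1) : Unit ⊕ ℤ)) ^ (p*q) *
      (FreeGroup.of (Sum.inr i)) ^ (-(2*p*q+1)) *
      (FreeGroup.of (Sum.inr (i-1))) ^ (p*q)) ∈ hpqRels p q := by
    simp only [hpqRels, Set.mem_union, Set.mem_iUnion, Set.mem_singleton_iff]
    exact Or.inl (Or.inr ⟨i, rfl⟩)
  have h2' := mk_rel h
  simp only [map_mul, map_zpow] at h2'
  exact h2'

lemma H_tau (i : ℤ) : (PresentedGroup.of (Sum.inl ()) : Hpq p q) *
    PresentedGroup.of (Sum.inr i) * (PresentedGroup.of (Sum.inl ()))⁻¹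
    = PresentedGroup.of (Sum.inr (i+1)) := by
  have h : (FreeGroup.of (Sum.inl () : Unit ⊕ ℤ) * FreeGroup.of (Sum.inr i) *
      (FreeGroup.of (Sum.inl ()))⁻¹ * (FreeGroup.of (Sum.inr (i+1)))⁻¹) ∈ hpqRels p q := by
    simp only [hpqRels, Set.mem_union, Set.mem_iUnion, Set.mem_singleton_iff]
    exact Or.inr ⟨i, rfl⟩
  have h2' := mk_rel h
  simp only [map_mul, map_inv] at h2'
  have h2 : (PresentedGroup.of (Sum.inl ()) : Hpq p q) * PresentedGroup.of (Sum.inr i) *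
      (PresentedGroup.of (Sum.inl ()))⁻¹ * (PresentedGroup.of (Sum.inr (i+1)))⁻¹ = 1 := h2'
  exact mul_inv_eq_one.mp h2

/-! ### The shift automorphism of `K` -/

lemma shift_rels (c : ℤ) : ∀ r ∈ kerRels p q,
    FreeGroup.lift (fun n => (PresentedGroup.of (n + c) : PresentedGroup (kerRels p q))) r = 1 := by
  intro r hr
  simp only [kerRels, Set.mem_union, Set.mem_iUnion, Set.mem_singleton_iff] at hr
  rcases hr with ⟨i, j, rfl⟩ | ⟨i, rfl⟩
  · simp only [map_mul, map_inv, FreeGroup.lift_apply_of]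
    calc (PresentedGroup.of (i+c) : PresentedGroup (kerRels p q))⁻¹ * (PresentedGroup.of (j+c))⁻¹ *
        PresentedGroup.of (i+c) * PresentedGroup.of (j+c)
        = (PresentedGroup.of (i+c))⁻¹ * (PresentedGroup.of (j+c))⁻¹ *
          (PresentedGroup.of (j+c) * PresentedGroup.of (i+c)) := by
          rw [K_comm]; group
      _ = 1 := by group
  · simp only [map_mul, map_zpow, FreeGroup.lift_apply_of]
    have := K_rel p q (i + c)
    have e1 : i + c + 1 = i + 1 + c := by ring
    have e2 : i + c - 1 = i - 1 + c := by ring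
    rw [e1, e2] at this
    exact this

/-- The shift-by-`c` endomorphism of `K`. -/
def shiftHom (c : ℤ) : PresentedGroup (kerRels p q) →* PresentedGroup (kerRels p q) :=
  PresentedGroup.toGroup (shift_rels p q c)

@[simp] lemma shiftHom_of (c n : ℤ) :
    shiftHom p q c (PresentedGroup.of n) = PresentedGroup.of (n + c) :=
  PresentedGroup.toGroup.of _

/-- The shift automorphism of `K`. -/
def sigma : MulAut (PresentedGroup (kerRels p q)) :=
  MonoidHom.toMulEquiv (shiftHom p q 1) (shiftHom p q (-1))
    (by apply PresentedGroup.ext; intro n; simp)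
    (by apply PresentedGroup.ext; intro n; simp)

@[simp] lemma sigma_of (n : ℤ) :
    sigma p q (PresentedGroup.of n) = PresentedGroup.of (n + 1) := by
  simp [sigma, MonoidHom.toMulEquiv]

@[simp] lemma sigma_inv_of (n : ℤ) :
    (sigma p q)⁻¹ (PresentedGroup.of n) = PresentedGroup.of (n + -1) := by
  rw [MulAut.inv_def]
  simp [sigma, MonoidHom.toMulEquiv]

lemma sigma_zpow_of (m n : ℤ) :
    (sigma p q ^ m) (PresentedGroup.of n) = PresentedGroup.of (n + m) := by
  induction m using Int.induction_on generalizing n with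
  | zero => simp
  | succ k ih =>
    rw [zpow_add, zpow_one]
    show (sigma p q ^ (k:ℤ)) (sigma p q (PresentedGroup.of n)) = _
    rw [sigma_of, ih]
    congr 1; ring
  | pred k ih =>
    rw [sub_eq_add_neg, zpow_add, zpow_neg_one]
    show (sigma p q ^ (-k:ℤ)) ((sigma p q)⁻¹ (PresentedGroup.of n)) = _
    rw [sigma_inv_of, ih]
    congr 1; ring

/-! ### The map `φ₀ : K →* H` -/

lemma phi0_rels : ∀ r ∈ kerRels p q,
    FreeGroup.lift (fun n => (PresentedGroup.of (Sum.inr n) : Hpq p q)) r = 1 := by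
  intro r hr
  simp only [kerRels, Set.mem_union, Set.mem_iUnion, Set.mem_singleton_iff] at hr
  rcases hr with ⟨i, j, rfl⟩ | ⟨i, rfl⟩
  · simp only [map_mul, map_inv, FreeGroup.lift_apply_of]
    calc (PresentedGroup.of (Sum.inr i) : Hpq p q)⁻¹ * (PresentedGroup.of (Sum.inr j))⁻¹ *
        PresentedGroup.of (Sum.inr i) * PresentedGroup.of (Sum.inr j)
        = (PresentedGroup.of (Sum.inr i))⁻¹ * (PresentedGroup.of (Sum.inr j))⁻¹ *
          (PresentedGroup.of (Sum.inr j) * PresentedGroup.of (Sum.inr i)) := by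
          rw [H_comm]; group
      _ = 1 := by group
  · simp only [map_mul, map_zpow, FreeGroup.lift_apply_of]
    exact H_rel p q i

/-- The natural map `K →* H` sending `x_n` to `x_n`. -/
def phi0 : PresentedGroup (kerRels p q) →* Hpq p q :=
  PresentedGroup.toGroup (phi0_rels p q)

@[simp] lemma phi0_of (n : ℤ) :
    phi0 p q (PresentedGroup.of n) = PresentedGroup.of (Sum.inr n) :=
  PresentedGroup.toGroup.of _

/-! ### Conjugation by `τ` in `H` -/

lemma H_tau_inv (i : ℤ) : (PresentedGroup.of (Sum.inl ()) : Hpq p q)⁻¹ *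
    PresentedGroup.of (Sum.inr i) * PresentedGroup.of (Sum.inl ())
    = PresentedGroup.of (Sum.inr (i - 1)) := by
  have := H_tau p q (i - 1)
  rw [sub_add_cancel] at this
  rw [← this]
  group

lemma H_tau_zpow (m i : ℤ) : (PresentedGroup.of (Sum.inl ()) : Hpq p q) ^ m *
    PresentedGroup.of (Sum.inr i) * ((PresentedGroup.of (Sum.inl ())) ^ m)⁻¹
    = PresentedGroup.of (Sum.inr (i + m)) := by
  induction m using Int.induction_on generalizing i with
  | zero => simp
  | succ k ih =>
    rw [show ((k:ℤ)+1) = (k:ℤ)+1 from rfl, zpow_add, zpow_one, mul_inv_rev]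
    have h : (PresentedGroup.of (Sum.inl ()) : Hpq p q) ^ (k:ℤ) * PresentedGroup.of (Sum.inl ()) *
        PresentedGroup.of (Sum.inr i) *
        ((PresentedGroup.of (Sum.inl ()))⁻¹ * (PresentedGroup.of (Sum.inl ()) ^ (k:ℤ))⁻¹)
        = PresentedGroup.of (Sum.inl ()) ^ (k:ℤ) *
          (PresentedGroup.of (Sum.inl ()) * PresentedGroup.of (Sum.inr i) *
            (PresentedGroup.of (Sum.inl ()))⁻¹) * (PresentedGroup.of (Sum.inl ()) ^ (k:ℤ))⁻¹ := by
      group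
    rw [h, H_tau, ih]
    congr 1; ring
  | pred k ih =>
    rw [sub_eq_add_neg, zpow_add, zpow_neg_one, mul_inv_rev, inv_inv]
    have h : (PresentedGroup.of (Sum.inl ()) : Hpq p q) ^ (-k:ℤ) *
        (PresentedGroup.of (Sum.inl ()))⁻¹ * PresentedGroup.of (Sum.inr i) *
        (PresentedGroup.of (Sum.inl ()) * (PresentedGroup.of (Sum.inl ()) ^ (-k:ℤ))⁻¹)
        = PresentedGroup.of (Sum.inl ()) ^ (-k:ℤ) *
          ((PresentedGroup.of (Sum.inl ()))⁻¹ * PresentedGroup.of (Sum.inr i) *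
            PresentedGroup.of (Sum.inl ())) * (PresentedGroup.of (Sum.inl ()) ^ (-k:ℤ))⁻¹ := by
      group
    rw [h, H_tau_inv, ih]
    congr 1; ring

/-- `τ^m (φ₀ k) τ^{-m} = φ₀ (σ^m k)`. -/
lemma conj_phi0 (m : ℤ) (k : PresentedGroup (kerRels p q)) :
    (PresentedGroup.of (Sum.inl ()) : Hpq p q) ^ m * phi0 p q k *
      ((PresentedGroup.of (Sum.inl ())) ^ m)⁻¹ = phi0 p q ((sigma p q ^ m) k) := by
  have h : ((MulAut.conj ((PresentedGroup.of (Sum.inl ()) : Hpq p q) ^ m)).toMonoidHom.comp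
      (phi0 p q)) = (phi0 p q).comp (sigma p q ^ m : MulAut _).toMonoidHom := by
    apply PresentedGroup.ext
    intro n
    simp only [MonoidHom.comp_apply, MulEquiv.coe_toMonoidHom, MulAut.conj_apply, phi0_of]
    rw [sigma_zpow_of, phi0_of, H_tau_zpow]
  exact DFunLike.congr_fun h k

/-! ### The retraction `Φ : H →* K ⋊ Multiplicative ℤ` -/

/-- The action of `Multiplicative ℤ` on `K` by powers of the shift. -/
def act : Multiplicative ℤ →* MulAut (PresentedGroup (kerRels p q)) :=
  zpowersHom _ (sigma p q)

/-- Generators for the retraction. -/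
def Phif : Unit ⊕ ℤ → PresentedGroup (kerRels p q) ⋊[act p q] Multiplicative ℤ :=
  Sum.elim (fun _ => SemidirectProduct.inr (Multiplicative.ofAdd 1))
    (fun n => SemidirectProduct.inl (PresentedGroup.of n))

lemma Phi_rels : ∀ r ∈ hpqRels p q, FreeGroup.lift (Phif p q) r = 1 := by
  intro r hr
  simp only [hpqRels, Set.mem_union, Set.mem_iUnion, Set.mem_singleton_iff] at hr
  rcases hr with (⟨i, j, rfl⟩ | ⟨i, rfl⟩) | ⟨i, rfl⟩
  · simp only [map_mul, map_inv, FreeGroup.lift_apply_of, Phif, Sum.elim_inr]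
    rw [← map_inv, ← map_inv, ← map_mul, ← map_mul, ← map_mul]
    rw [show (PresentedGroup.of i : PresentedGroup (kerRels p q))⁻¹ * (PresentedGroup.of j)⁻¹ *
        PresentedGroup.of i * PresentedGroup.of j = 1 from ?_, map_one]
    calc (PresentedGroup.of i : PresentedGroup (kerRels p q))⁻¹ * (PresentedGroup.of j)⁻¹ *
        PresentedGroup.of i * PresentedGroup.of j
        = (PresentedGroup.of i)⁻¹ * (PresentedGroup.of j)⁻¹ *
          (PresentedGroup.of j * PresentedGroup.of i) := by rw [K_comm]; group
      _ = 1 := by group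
  · simp only [map_mul, map_zpow, FreeGroup.lift_apply_of, Phif, Sum.elim_inr]
    rw [← map_zpow, ← map_zpow, ← map_zpow, ← map_mul, ← map_mul, K_rel, map_one]
  · simp only [map_mul, map_inv, FreeGroup.lift_apply_of, Phif, Sum.elim_inl, Sum.elim_inr]
    have h := SemidirectProduct.inl_aut (φ := act p q) (Multiplicative.ofAdd 1)
      (PresentedGroup.of i)
    have hact : act p q (Multiplicative.ofAdd 1) (PresentedGroup.of i)
        = PresentedGroup.of (i + 1) := by
      have he : act p q (Multiplicative.ofAdd 1) = sigma p q := by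
        rw [act, zpowersHom_apply]; simp
      rw [he, sigma_of]
    rw [hact] at h
    rw [← map_inv, ← h]
    simp

/-- The retraction `H →* K ⋊ Multiplicative ℤ`. -/
def Phi : Hpq p q →* PresentedGroup (kerRels p q) ⋊[act p q] Multiplicative ℤ :=
  PresentedGroup.toGroup (Phi_rels p q)

lemma Phi_comp_phi0 : (Phi p q).comp (phi0 p q) = SemidirectProduct.inl := by
  apply PresentedGroup.ext
  intro n
  simp only [MonoidHom.comp_apply, phi0_of]
  exact PresentedGroup.toGroup.of _

lemma phi0_injective : Function.Injective (phi0 p q) := by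
  intro a b hab
  have := congrArg (Phi p q) hab
  have ha := DFunLike.congr_fun (Phi_comp_phi0 p q) a
  have hb := DFunLike.congr_fun (Phi_comp_phi0 p q) b
  simp only [MonoidHom.comp_apply] at ha hb
  rw [ha, hb] at this
  exact SemidirectProduct.inl_injective this

/-! ### Surjectivity onto the kernel -/

/-- Every element of `H` has normal form `φ₀ k * τ^(ρ g)`. -/
lemma normal_form (ρ : Hpq p q →* Multiplicative ℤ)
    (hτ : ρ (PresentedGroup.of (Sum.inl ())) = Multiplicative.ofAdd 1)
    (hx : ∀ n : ℤ, ρ (PresentedGroup.of (Sum.inr n)) = 1) (g : Hpq p q) : ∃ k : PresentedGroup (kerRels p q),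
    g = phi0 p q k * (PresentedGroup.of (Sum.inl ()) : Hpq p q) ^ ((ρ g).toAdd) := by
  let S : Subgroup (Hpq p q) :=
    { carrier := {g | ∃ k, g = phi0 p q k *
        (PresentedGroup.of (Sum.inl ()) : Hpq p q) ^ ((ρ g).toAdd)}
      one_mem' := ⟨1, by simp⟩
      mul_mem' := by
        rintro a b ⟨k₁, hk₁⟩ ⟨k₂, hk₂⟩
        refine ⟨k₁ * (sigma p q ^ ((ρ a).toAdd)) k₂, ?_⟩
        rw [map_mul, ← conj_phi0]
        rw [map_mul, toAdd_mul, zpow_add]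
        calc a * b = phi0 p q k₁ * (PresentedGroup.of (Sum.inl ()) : Hpq p q) ^ ((ρ a).toAdd) *
            (phi0 p q k₂ * (PresentedGroup.of (Sum.inl ())) ^ ((ρ b).toAdd)) := by
              rw [← hk₁, ← hk₂]
          _ = phi0 p q k₁ * ((PresentedGroup.of (Sum.inl ()) : Hpq p q) ^ ((ρ a).toAdd) *
              phi0 p q k₂ * ((PresentedGroup.of (Sum.inl ())) ^ ((ρ a).toAdd))⁻¹) *
              ((PresentedGroup.of (Sum.inl ())) ^ ((ρ a).toAdd) *
                (PresentedGroup.of (Sum.inl ())) ^ ((ρ b).toAdd)) := by group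
      inv_mem' := by
        rintro a ⟨k, hk⟩
        refine ⟨(sigma p q ^ (-(ρ a).toAdd)) k⁻¹, ?_⟩
        rw [← conj_phi0, map_inv, map_inv ρ, toAdd_inv]
        conv_lhs => rw [hk]
        group }
  refine PresentedGroup.generated_by (hpqRels p q) S ?_ g
  rintro (⟨⟩ | n)
  · exact ⟨1, by simp [hτ]⟩
  · exact ⟨PresentedGroup.of n, by simp [hx n]⟩

end KerRhoAux

open KerRhoAux

/-- the kernel of the homomorphism `ρ : H_{p,q} → ℤ` with `ρ(τ) = 1` and
`ρ(x_n) = 0` is isomorphic to the group presented by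
`< x_n (n ∈ ℤ) | [x_i, x_j] = 1, x_{i+1}^{pq} x_i^{-(2pq+1)} x_{i-1}^{pq} = 1 >`,
via a map sending each generator `x_n` to the element `x_n` of `H_{p,q}`. -/
theorem ker_rho_presentation (p q : ℤ) (hp : 0 < p) (hq : 0 < q)
    (ρ : Hpq p q →* Multiplicative ℤ)
    (hτ : ρ (PresentedGroup.of (Sum.inl ())) = Multiplicative.ofAdd 1)
    (hx : ∀ n : ℤ, ρ (PresentedGroup.of (Sum.inr n)) = 1) :
    ∃ φ : PresentedGroup (kerRels p q) ≃* ρ.ker,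
      ∀ n : ℤ, ((φ (PresentedGroup.of n) : ρ.ker) : Hpq p q) =
        PresentedGroup.of (Sum.inr n) := by
  have hker : ∀ k, phi0 p q k ∈ ρ.ker := by
    intro k
    have h1 : ρ.comp (phi0 p q) = 1 := by
      apply PresentedGroup.ext
      intro n
      simp [hx n]
    have := DFunLike.congr_fun h1 k
    simpa [MonoidHom.mem_ker] using this
  let φ' : PresentedGroup (kerRels p q) →* ρ.ker := (phi0 p q).codRestrict ρ.ker hker
  have hinj : Function.Injective φ' := fun a b h =>
    phi0_injective p q (congrArg Subtype.val h)
  have hsurj : Function.Surjective φ' := by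
    rintro ⟨g, hg⟩
    obtain ⟨k, hk⟩ := normal_form p q ρ hτ hx g
    rw [MonoidHom.mem_ker] at hg
    refine ⟨k, Subtype.ext ?_⟩
    show phi0 p q k = g
    rw [hk, hg]
    simp
  refine ⟨MulEquiv.ofBijective φ' ⟨hinj, hsurj⟩, fun n => ?_⟩
  show ((φ' (PresentedGroup.of n) : ρ.ker) : Hpq p q) = _
  simp [φ']
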